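/- Let λ > 0, μ ≥ 1, and y ≥ 1/2. Define SC(t) for agents: μλ at position 0, (μ+1)(λ/2) at position 0, and (μ+1)(λ/2) at position 1. Then SC(0) = (μ+1)λ/2, SC(y) ≥ (μ+1)λ/2 + μλy, hence SC(y)/SC(0) ≥ 1 + μ/(μ+1), which tends to 2 as μ → ∞. -/

import Mathlib

theorem stmt_16 (lam y : ℝ) (hlam : 0 < lam) (hy : y ≥ 1/2)
    (μ : ℕ) (hμ : 1 ≤ μ)
    (SC : ℝ → ℝ)
    (hSC : ∀ t, SC t = (μ : ℝ) * lam * |t - 0|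
      + ((μ : ℝ) + 1) * (lam / 2) * |t - 0|
      + ((μ : ℝ) + 1) * (lam / 2) * |t - 1|) :
    SC 0 = ((μ : ℝ) + 1) * lam / 2 ∧
    SC y ≥ ((μ : ℝ) + 1) * lam / 2 + (μ : ℝ) * lam * y ∧
    SC y / SC 0 ≥ 1 + (μ : ℝ) / ((μ : ℝ) + 1) ∧
    Filter.Tendsto (fun m : ℕ => 1 + (m : ℝ) / ((m : ℝ) + 1))
      Filter.atTop (nhds 2) := by
  have hy0 : (0:ℝ) ≤ y := by linarith
  have hμ0 : (0:ℝ) ≤ (μ:ℝ) := Nat.cast_nonneg μ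
  have h0 : SC 0 = ((μ : ℝ) + 1) * lam / 2 := by
    rw [hSC]
    simp [abs_of_nonpos]
    ring
  have habs : |y - 1| ≥ 1 - y := neg_le_abs _ |>.trans_eq' (by ring) |>.trans_eq rfl
  have habs' : |y - 1| ≥ 1 - y := by
    have := neg_abs_le (y - 1); linarith [neg_abs_le (y-1), le_abs_self (y-1)]
  have hsy : SC y ≥ ((μ : ℝ) + 1) * lam / 2 + (μ : ℝ) * lam * y := by
    rw [hSC]
    rw [sub_zero, abs_of_nonneg hy0]
    nlinarith [habs', mul_nonneg hμ0 hlam.le]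
  refine ⟨h0, hsy, ?_, ?_⟩
  · have hpos : 0 < SC 0 := by rw [h0]; positivity
    rw [ge_iff_le, le_div_iff₀ hpos, h0]
    have h2 : SC y ≥ ((μ : ℝ) + 1) * lam / 2 + (μ : ℝ) * lam * (1/2) := by
      have : (μ:ℝ) * lam * (1/2) ≤ (μ:ℝ) * lam * y :=
        mul_le_mul_of_nonneg_left hy (mul_nonneg hμ0 hlam.le)
      linarith
    have hμ1 : (0:ℝ) < (μ:ℝ) + 1 := by positivity
    have hne : ((μ:ℝ)+1) ≠ 0 := ne_of_gt hμ1
    have key : (1 + (μ:ℝ)/((μ:ℝ)+1)) * (((μ:ℝ)+1) * lam / 2)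
        = ((μ:ℝ)+1) * lam / 2 + (μ:ℝ) * lam / 2 := by
      field_simp
    rw [key]
    linarith
  · have h1 : Filter.Tendsto (fun m : ℕ => (m : ℝ) / ((m : ℝ) + 1))
        Filter.atTop (nhds 1) := tendsto_natCast_div_add_atTop (1:ℝ)
    rw [show (2:ℝ) = 1 + 1 by norm_num]
    exact tendsto_const_nhds.add h1
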